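/- Let (Ω, F, P) be a probability space and (X_n)_{n≥1} a mutually independent sequence of real random variables such that each X_n takes values in a two-element set {a_1, a_2} ⊂ ℝ, E[X_n] = 0 and E[X_n²] = 1, and assume F = σ(X_n : n ≥ 1). Then the linear span of the family of finite products {∏_{i∈S} X_i : S a finite subset of ℕ≥1} (with the empty product equal to the constant 1) is dense in L²(Ω, F, P). -/

import Mathlib

open MeasureTheory

/-- If `(X n)` is a mutually independent sequence of centered,
reduced random variables each taking values in a two-element set
`{a₁, a₂} ⊂ ℝ`, generating the σ-algebra of `Ω`, then the linear span of the
finite products `∏_{i ∈ S} X i` (empty product = `1`) is dense in `L²(Ω, F, P)`. -/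
theorem stmt_12 {Ω : Type*} [MeasurableSpace Ω] (P : Measure Ω)
    [IsProbabilityMeasure P] (X : ℕ → Ω → ℝ) (hXm : ∀ n, Measurable (X n))
    (hindep : ProbabilityTheory.iIndepFun X P)
    (a₁ a₂ : ℝ) (ha : a₁ ≠ a₂)
    (hval : ∀ n ω, X n ω = a₁ ∨ X n ω = a₂)
    (hcent : ∀ n, ∫ ω, X n ω ∂P = 0)
    (hred : ∀ n, ∫ ω, X n ω ^ 2 ∂P = 1)
    (hgen : (inferInstance : MeasurableSpace Ω) =
      ⨆ n : ℕ, MeasurableSpace.comap (X n) (inferInstance : MeasurableSpace ℝ)) :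
    Dense (↑(Submodule.span ℝ
      {f : Lp ℝ 2 P | ∃ S : Finset ℕ, ∀ᵐ ω ∂P, f ω = ∏ i ∈ S, X i ω}) :
        Set (Lp ℝ 2 P)) := by
  classical
  rw [Submodule.dense_iff_topologicalClosure_eq_top,
    Submodule.topologicalClosure_eq_top_iff, Submodule.eq_bot_iff]
  intro g hg
  -- basic boundedness facts
  set M : ℝ := max |a₁| |a₂| with hM
  have hbd : ∀ n ω, ‖X n ω‖ ≤ M := by
    intro n ω
    rcases hval n ω with h | h <;> rw [Real.norm_eq_abs, h]
    · exact le_max_left _ _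
    · exact le_max_right _ _
  have hgi : Integrable (g : Ω → ℝ) P :=
    (Lp.memLp g).integrable (by norm_num)
  have hprod_meas : ∀ S : Finset ℕ, Measurable fun ω => ∏ i ∈ S, X i ω := by
    intro S
    exact Finset.measurable_prod S fun i _ => hXm i
  have hprod_bd : ∀ (S : Finset ℕ) ω, ‖∏ i ∈ S, X i ω‖ ≤ M ^ S.card := by
    intro S ω
    rw [Real.norm_eq_abs, Finset.abs_prod]
    calc ∏ i ∈ S, |X i ω| ≤ ∏ i ∈ S, M :=
          Finset.prod_le_prod (fun i _ => abs_nonneg _) (fun i _ => hbd i ω)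
      _ = M ^ S.card := Finset.prod_const M
  have hprod_int : ∀ S : Finset ℕ,
      Integrable (fun ω => (∏ i ∈ S, X i ω) * (g : Ω → ℝ) ω) P := by
    intro S
    exact hgi.bdd_mul (hprod_meas S).aestronglyMeasurable (Filter.Eventually.of_forall (hprod_bd S))
  -- orthogonality gives vanishing of all product integrals
  have Horth : ∀ S : Finset ℕ,
      ∫ ω, (∏ i ∈ S, X i ω) * (g : Ω → ℝ) ω ∂P = 0 := by
    intro S
    have hmem : MemLp (fun ω => ∏ i ∈ S, X i ω) 2 P :=
      MemLp.of_bound (hprod_meas S).aestronglyMeasurable (M ^ S.card)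
        (Filter.Eventually.of_forall (hprod_bd S))
    have hfK : hmem.toLp _ ∈ Submodule.span ℝ
        {f : Lp ℝ 2 P | ∃ S : Finset ℕ, ∀ᵐ ω ∂P, f ω = ∏ i ∈ S, X i ω} :=
      Submodule.subset_span ⟨S, hmem.coeFn_toLp⟩
    have hf := hg _ hfK
    rw [L2.inner_def] at hf
    rw [← hf]
    apply integral_congr_ae
    filter_upwards [hmem.coeFn_toLp] with ω hω
    rw [RCLike.inner_apply]
    simp [hω, mul_comm]
  -- also for products of `a₂ - X i`
  have Horth2 : ∀ S : Finset ℕ,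
      ∫ ω, (∏ i ∈ S, (a₂ - X i ω)) * (g : Ω → ℝ) ω ∂P = 0 := by
    intro S
    have hexp : ∀ ω : Ω, (∏ i ∈ S, (a₂ - X i ω)) * (g : Ω → ℝ) ω =
        ∑ t ∈ S.powerset,
          ((-1 : ℝ) ^ t.card * a₂ ^ (S \ t).card) *
            ((∏ i ∈ t, X i ω) * (g : Ω → ℝ) ω) := by
      intro ω
      have : ∀ i : ℕ, a₂ - X i ω = (-1) * X i ω + a₂ := by intro i; ring
      simp_rw [this, Finset.prod_add, Finset.prod_mul_distrib, Finset.prod_const,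
        Finset.sum_mul]
      congr 1 with t
      ring
    simp_rw [hexp]
    rw [integral_finset_sum]
    · apply Finset.sum_eq_zero
      intro t _
      rw [integral_const_mul, Horth t, mul_zero]
    · intro t _
      exact ((hprod_int t).const_mul _)
  -- hence the set integral of g over basic cylinder sets vanishes
  have hAmeas : ∀ S : Finset ℕ, MeasurableSet (⋂ i ∈ S, X i ⁻¹' {a₁}) := by
    intro S
    exact Finset.measurableSet_biInter S fun i _ => hXm i (measurableSet_singleton a₁)
  have Hcap : ∀ S : Finset ℕ,
      ∫ ω in ⋂ i ∈ S, X i ⁻¹' {a₁}, (g : Ω → ℝ) ω ∂P = 0 := by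
    intro S
    have hpt : ∀ ω : Ω, (∏ i ∈ S, (a₂ - X i ω)) * (g : Ω → ℝ) ω =
        (a₂ - a₁) ^ S.card *
          Set.indicator (⋂ i ∈ S, X i ⁻¹' {a₁}) (g : Ω → ℝ) ω := by
      intro ω
      by_cases hω : ω ∈ ⋂ i ∈ S, X i ⁻¹' {a₁}
      · have hx : ∀ i ∈ S, X i ω = a₁ := by
          intro i hi
          have := Set.mem_iInter₂.1 hω i hi
          simpa using this
        rw [Set.indicator_of_mem hω]
        rw [Finset.prod_congr rfl (fun i hi => by rw [hx i hi])]
        rw [Finset.prod_const]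
      · rw [Set.indicator_of_notMem hω, mul_zero]
        have : ∃ i ∈ S, X i ω ≠ a₁ := by
          by_contra h
          push_neg at h
          exact hω (Set.mem_iInter₂.2 fun i hi => h i hi)
        obtain ⟨i, hi, hne⟩ := this
        have hia : X i ω = a₂ := (hval i ω).resolve_left hne
        rw [Finset.prod_eq_zero hi (by rw [hia]; ring), zero_mul]
    have h0 := Horth2 S
    rw [integral_congr_ae (Filter.Eventually.of_forall hpt)] at h0
    rw [integral_const_mul, integral_indicator (hAmeas S)] at h0
    have hne : (a₂ - a₁) ^ S.card ≠ 0 := pow_ne_zero _ (sub_ne_zero.2 (Ne.symm ha))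
    exact (mul_eq_zero.1 h0).resolve_left hne
  -- the cylinder sets form a π-system generating the σ-algebra
  set C : Set (Set Ω) := {t | ∃ S : Finset ℕ, t = ⋂ i ∈ S, X i ⁻¹' {a₁}} with hCdef
  have hpi : IsPiSystem C := by
    rintro t1 ⟨S1, rfl⟩ t2 ⟨S2, rfl⟩ -
    refine ⟨S1 ∪ S2, ?_⟩
    ext ω
    simp only [Set.mem_inter_iff, Set.mem_iInter, Finset.mem_union]
    constructor
    · rintro ⟨h1, h2⟩ i hi
      rcases hi with hi | hi
      · exact h1 i hi
      · exact h2 i hi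
    · intro h
      exact ⟨fun i hi => h i (Or.inl hi), fun i hi => h i (Or.inr hi)⟩
  have hCgen : (inferInstance : MeasurableSpace Ω) = MeasurableSpace.generateFrom C := by
    apply le_antisymm
    · rw [hgen]
      apply iSup_le
      intro n s hs
      obtain ⟨B, hB, rfl⟩ := hs
      have hsingle : X n ⁻¹' {a₁} ∈ C := ⟨{n}, by simp⟩
      by_cases h1 : a₁ ∈ B <;> by_cases h2 : a₂ ∈ B
      · have : X n ⁻¹' B = Set.univ := by
          ext ω
          simp only [Set.mem_preimage, Set.mem_univ, iff_true]
          rcases hval n ω with h | h <;> rw [h] <;> assumption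
        rw [this]
        exact @MeasurableSet.univ Ω (MeasurableSpace.generateFrom C)
      · have : X n ⁻¹' B = X n ⁻¹' {a₁} := by
          ext ω
          simp only [Set.mem_preimage, Set.mem_singleton_iff]
          rcases hval n ω with h | h <;> rw [h] <;> simp [h1, h2, ha, ha.symm]
        rw [this]
        exact MeasurableSpace.measurableSet_generateFrom hsingle
      · have : X n ⁻¹' B = (X n ⁻¹' {a₁})ᶜ := by
          ext ω
          simp only [Set.mem_preimage, Set.mem_compl_iff, Set.mem_singleton_iff]
          rcases hval n ω with h | h <;> rw [h] <;> simp [h1, h2, ha, ha.symm]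
        rw [this]
        exact (MeasurableSpace.measurableSet_generateFrom hsingle).compl
      · have : X n ⁻¹' B = ∅ := by
          ext ω
          simp only [Set.mem_preimage, Set.mem_empty_iff_false, iff_false]
          rcases hval n ω with h | h <;> rw [h] <;> assumption
        rw [this]
        exact @MeasurableSet.empty Ω (MeasurableSpace.generateFrom C)
    · apply MeasurableSpace.generateFrom_le
      rintro t ⟨S, rfl⟩
      exact hAmeas S
  -- Dynkin π-λ argument: set integrals of g vanish on all measurable sets
  have Huniv : ∫ ω, (g : Ω → ℝ) ω ∂P = 0 := by
    have := Hcap ∅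
    simpa using this
  have Hall : ∀ ⦃t : Set Ω⦄, MeasurableSet t → ∫ ω in t, (g : Ω → ℝ) ω ∂P = 0 := by
    refine MeasurableSpace.induction_on_inter hCgen hpi ?_ ?_ ?_ ?_
    · simp
    · rintro t ⟨S, rfl⟩
      exact Hcap S
    · intro t ht h0
      have hsum := integral_add_compl ht hgi
      rw [h0, Huniv] at hsum
      linarith
    · intro f hd hm h0
      rw [integral_iUnion hm hd hgi.integrableOn]
      simp [h0]
  have hg0 : (g : Ω → ℝ) =ᵐ[P] 0 :=
    Lp.ae_eq_zero_of_forall_setIntegral_eq_zero g (by norm_num) (by norm_num)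
      (fun s _ _ => hgi.integrableOn) (fun s hs _ => Hall hs)
  exact Lp.eq_zero_iff_ae_eq_zero.2 hg0
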